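/- The closed subgroup of SL₂(ℤ₃) generated by the three matrices z₀, z₁, z₂ equals the first congruence kernel N₁ (the group of matrices congruent to the identity modulo 3). -/

import Mathlib

open Matrix MatrixGroups

noncomputable section

/-- The topology on `SL(n, R)` induced from the space of matrices. -/
instance {n : Type*} [DecidableEq n] [Fintype n] {R : Type*} [CommRing R] [TopologicalSpace R] :
    TopologicalSpace (SpecialLinearGroup n R) :=
  inferInstanceAs (TopologicalSpace {A : Matrix n n R // A.det = 1})

/-- `SL(n, R)` is a topological group. -/
instance {n : Type*} [DecidableEq n] [Fintype n] {R : Type*} [CommRing R] [TopologicalSpace R]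
    [IsTopologicalRing R] : IsTopologicalGroup (SpecialLinearGroup n R) where
  continuous_mul := by
    apply continuous_induced_rng.2
    exact (continuous_subtype_val.comp continuous_fst).mul (continuous_subtype_val.comp continuous_snd)
  continuous_inv := by
    have h : Continuous fun A : SpecialLinearGroup n R => ((A : Matrix n n R)).adjugate :=
      Continuous.matrix_adjugate continuous_subtype_val
    have e : (fun A : SpecialLinearGroup n R => ((A⁻¹ : SpecialLinearGroup n R) : Matrix n n R))
        = fun A : SpecialLinearGroup n R => ((A : Matrix n n R)).adjugate := by
      funext A; exact Matrix.SpecialLinearGroup.coe_inv A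
    apply continuous_induced_rng.2
    show Continuous fun A : SpecialLinearGroup n R => ((A⁻¹ : SpecialLinearGroup n R) : Matrix n n R)
    rw [e]; exact h

private abbrev M2 : Type := Matrix (Fin 2) (Fin 2) ℤ_[3]

private def Cong (k : ℕ) (A B : M2) : Prop := ∀ i j, (3:ℤ_[3])^k ∣ (A i j - B i j)

private lemma cong_refl (k : ℕ) (A : M2) : Cong k A A := fun i j => by simp

private lemma cong_symm {k : ℕ} {A B : M2} (hc : Cong k A B) : Cong k B A := fun i j => by
  have := (hc i j).neg_right; simpa using this

private lemma cong_trans {k : ℕ} {A B C : M2} (h1 : Cong k A B) (h2 : Cong k B C) :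
    Cong k A C := fun i j => by
  have := dvd_add (h1 i j) (h2 i j); simpa using this

private lemma cong_weaken {k l : ℕ} {A B : M2} (hkl : l ≤ k) (hc : Cong k A B) :
    Cong l A B := fun i j => dvd_trans (pow_dvd_pow _ hkl) (hc i j)

private lemma cong_mul {k : ℕ} {A B C D : M2} (h1 : Cong k A B) (h2 : Cong k C D) :
    Cong k (A * C) (B * D) := by
  intro i j
  have e : (A * C) i j - (B * D) i j
      = (A i 0 - B i 0) * C 0 j + (A i 1 - B i 1) * C 1 j
        + (B i 0 * (C 0 j - D 0 j) + B i 1 * (C 1 j - D 1 j)) := by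
    simp [Matrix.mul_apply, Fin.sum_univ_two]; ring
  rw [e]
  exact dvd_add (dvd_add ((h1 i 0).mul_right _) ((h1 i 1).mul_right _))
    (dvd_add ((h2 0 j).mul_left _) ((h2 1 j).mul_left _))

private lemma model_mul (P Q : M2) :
    Cong 2 ((1+(3:ℤ_[3])•P)*(1+(3:ℤ_[3])•Q)) (1+(3:ℤ_[3])•(P+Q)) := by
  have e : (1+(3:ℤ_[3])•P)*(1+(3:ℤ_[3])•Q) = 1+(3:ℤ_[3])•(P+Q) + (9:ℤ_[3])•(P*Q) := by
    simp only [mul_add, add_mul, one_mul, mul_one, smul_mul_assoc, mul_smul_comm, smul_smul,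
      smul_add]
    module
  rw [e]
  intro i j
  have e2 : (1+(3:ℤ_[3])•(P+Q) + (9:ℤ_[3])•(P*Q)) i j - (1+(3:ℤ_[3])•(P+Q)) i j
      = 3^2 * (P*Q) i j := by
    simp only [Matrix.add_apply, Matrix.smul_apply, smul_eq_mul, Matrix.one_apply]
    ring
  rw [e2]; exact Dvd.intro _ rfl

private lemma model_pow {z m : M2} (hz : Cong 2 z (1+(3:ℤ_[3])•m)) (e : ℕ) :
    Cong 2 (z^e) (1+(3:ℤ_[3])•((e:ℤ_[3])•m)) := by
  induction e with
  | zero => simpa using cong_refl 2 1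
  | succ n ih =>
      have h1 := cong_mul ih hz
      have h2 := model_mul ((n:ℤ_[3])•m) m
      have h3 := cong_trans h1 h2
      rw [pow_succ]
      have e1 : (n:ℤ_[3])•m + m = ((n+1 : ℕ):ℤ_[3])•m := by
        push_cast; rw [add_smul, one_smul]
      rwa [e1] at h3

private lemma cube_id (m : ℕ) (N : M2) :
    (1 + (3:ℤ_[3])^(m+1) • N)^3
      = 1 + (3:ℤ_[3])^(m+2) • (N + (3:ℤ_[3])^(m+1)•(N*N) + (3:ℤ_[3])^(2*m+1)•(N*N*N)) := by
  simp only [pow_succ, pow_zero, one_mul, mul_add, add_mul, mul_one, smul_mul_assoc,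
    mul_smul_comm, smul_smul, smul_add]
  module

private lemma appr1 (x : ℤ_[3]) : (3:ℤ_[3]) ∣ x - ((x.appr 1 : ℕ) : ℤ_[3]) := by
  have h := PadicInt.appr_spec 1 x
  rw [Ideal.mem_span_singleton] at h
  simpa using h

private lemma pad3_ne_zero : (3:ℤ_[3]) ≠ 0 := by norm_num

private noncomputable def mm₀ : M2 := !![2,0;0,1]
private noncomputable def mm₁ : M2 := !![1,1;0,2]
private noncomputable def mm₂ : M2 := !![1,0;2,2]

private lemma genP (z₀ z₁ z₂ : SL(2, ℤ_[3]))
    (h₀ : Cong 2 (z₀ : M2) (1+(3:ℤ_[3])•mm₀))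
    (h₁ : Cong 2 (z₁ : M2) (1+(3:ℤ_[3])•mm₁))
    (h₂ : Cong 2 (z₂ : M2) (1+(3:ℤ_[3])•mm₂)) (m : ℕ) :
    ∀ a b c : ℤ_[3], ∃ g ∈ Subgroup.closure {z₀, z₁, z₂}, ∃ M : M2,
      (g : M2) = 1 + (3:ℤ_[3])^(m+1) • M ∧ ((3:ℤ_[3]) ∣ (M 0 0 - a)) ∧
      ((3:ℤ_[3]) ∣ (M 0 1 - b)) ∧ ((3:ℤ_[3]) ∣ (M 1 0 - c)) ∧ ((3:ℤ_[3]) ∣ (M 1 1 + a)) := by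
  induction m with
  | zero =>
    intro a b c
    set e₀ := ((2*a+b+2*c).appr 1) with he₀def
    set e₁ := (b.appr 1) with he₁def
    set e₂ := ((2*c).appr 1) with he₂def
    set X : SL(2, ℤ_[3]) := z₀^e₀ * z₁^e₁ * z₂^e₂ with hXdef
    have hXmem : X ∈ Subgroup.closure {z₀, z₁, z₂} := by
      exact mul_mem (mul_mem (pow_mem (Subgroup.subset_closure (by simp)) _)
        (pow_mem (Subgroup.subset_closure (by simp)) _))
        (pow_mem (Subgroup.subset_closure (by simp)) _)
    set S : M2 := ((e₀:ℤ_[3]))•mm₀ + ((e₁:ℤ_[3]))•mm₁ + ((e₂:ℤ_[3]))•mm₂ with hSdef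
    have hcong : Cong 2 (X : M2) (1+(3:ℤ_[3])•S) := by
      have c0 := model_pow h₀ e₀
      have c1 := model_pow h₁ e₁
      have c2 := model_pow h₂ e₂
      have t1 := cong_trans (cong_mul c0 c1) (model_mul _ _)
      have t2 := cong_trans (cong_mul t1 c2) (model_mul _ _)
      simpa [hXdef, Matrix.SpecialLinearGroup.coe_mul, Matrix.SpecialLinearGroup.coe_pow,
        hSdef] using t2
    have hM1 : ∀ i j, ∃ d : ℤ_[3], (X : M2) i j - (1:M2) i j = 3 * d := by
      intro i j
      obtain ⟨d9, hd9⟩ := hcong i j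
      have hT : (1+(3:ℤ_[3])•S) i j = (1:M2) i j + 3 * S i j := by
        simp [Matrix.add_apply, Matrix.smul_apply, smul_eq_mul]
      exact ⟨S i j + 3 * d9, by linear_combination hd9 + hT⟩
    choose Md hMd using hM1
    set M : M2 := Matrix.of Md with hMdef
    have hXM : (X : M2) = 1 + (3:ℤ_[3])^(0+1) • M := by
      ext i j
      have hmd := hMd i j
      simp only [Matrix.add_apply, Matrix.smul_apply, smul_eq_mul, zero_add, pow_one,
        hMdef, Matrix.of_apply]
      linear_combination hmd
    have hMS : ∀ i j, ∃ v, M i j - S i j = 3 * v := by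
      intro i j
      obtain ⟨q, hq⟩ := hcong i j
      have hT : (1+(3:ℤ_[3])•S) i j = (1:M2) i j + 3 * S i j := by
        simp [Matrix.add_apply, Matrix.smul_apply, smul_eq_mul]
      refine ⟨q, mul_left_cancel₀ pad3_ne_zero ?_⟩
      have hmd := hMd i j
      have : M i j = Md i j := rfl
      linear_combination hq - hmd + hT + (3:ℤ_[3]) * this
    have hS00 : S 0 0 = 2*(e₀:ℤ_[3]) + (e₁:ℤ_[3]) + (e₂:ℤ_[3]) := by
      simp [hSdef, mm₀, mm₁, mm₂]; ring
    have hS01 : S 0 1 = (e₁:ℤ_[3]) := by simp [hSdef, mm₀, mm₁, mm₂]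
    have hS10 : S 1 0 = 2*(e₂:ℤ_[3]) := by simp [hSdef, mm₀, mm₁, mm₂]; ring
    have hS11 : S 1 1 = (e₀:ℤ_[3]) + 2*(e₁:ℤ_[3]) + 2*(e₂:ℤ_[3]) := by
      simp [hSdef, mm₀, mm₁, mm₂]; ring
    obtain ⟨u₀, hu₀⟩ := appr1 (2*a+b+2*c)
    obtain ⟨u₁, hu₁⟩ := appr1 b
    obtain ⟨u₂, hu₂⟩ := appr1 (2*c)
    rw [← he₀def] at hu₀; rw [← he₁def] at hu₁; rw [← he₂def] at hu₂
    obtain ⟨v00, hv00⟩ := hMS 0 0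
    obtain ⟨v01, hv01⟩ := hMS 0 1
    obtain ⟨v10, hv10⟩ := hMS 1 0
    obtain ⟨v11, hv11⟩ := hMS 1 1
    rw [hS00] at hv00; rw [hS01] at hv01; rw [hS10] at hv10; rw [hS11] at hv11
    refine ⟨X, hXmem, M, hXM, ?_, ?_, ?_, ?_⟩
    · exact ⟨v00 + (a+b+2*c-2*u₀-u₁-u₂), by linear_combination hv00 - 2*hu₀ - hu₁ - hu₂⟩
    · exact ⟨v01 - u₁, by linear_combination hv01 - hu₁⟩
    · exact ⟨v10 + (c - 2*u₂), by linear_combination hv10 - 2*hu₂⟩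
    · exact ⟨v11 + (a+b+2*c-u₀-2*u₁-2*u₂), by linear_combination hv11 - hu₀ - 2*hu₁ - 2*hu₂⟩
  | succ n ih =>
    intro a b c
    obtain ⟨g, hg, M, hgM, d00, d01, d10, d11⟩ := ih a b c
    set M' : M2 := M + (3:ℤ_[3])^(n+1)•(M*M) + (3:ℤ_[3])^(2*n+1)•(M*M*M) with hM'def
    have hentry : ∀ (i j : Fin 2) (t : ℤ_[3]), (3:ℤ_[3]) ∣ (M i j + t) →
        (3:ℤ_[3]) ∣ (M' i j + t) := by
      intro i j t hd
      have e : M' i j + t = (M i j + t) + ((3:ℤ_[3])^(n+1)*((M*M) i j)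
          + (3:ℤ_[3])^(2*n+1)*((M*M*M) i j)) := by
        simp [hM'def, Matrix.add_apply, Matrix.smul_apply, smul_eq_mul]; ring
      rw [e]
      exact dvd_add hd (dvd_add (dvd_mul_of_dvd_left (dvd_pow_self 3 n.succ_ne_zero) _)
        (dvd_mul_of_dvd_left (dvd_pow_self 3 (Nat.succ_ne_zero _)) _))
    refine ⟨g^3, pow_mem hg 3, M', ?_, ?_, ?_, ?_, ?_⟩
    · rw [Matrix.SpecialLinearGroup.coe_pow, hgM]; exact cube_id n M
    · simpa [sub_eq_add_neg] using hentry 0 0 (-a) (by simpa [sub_eq_add_neg] using d00)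
    · simpa [sub_eq_add_neg] using hentry 0 1 (-b) (by simpa [sub_eq_add_neg] using d01)
    · simpa [sub_eq_add_neg] using hentry 1 0 (-c) (by simpa [sub_eq_add_neg] using d10)
    · exact hentry 1 1 a d11

private lemma stepLemma (z₀ z₁ z₂ : SL(2, ℤ_[3]))
    (h₀ : Cong 2 (z₀ : M2) (1+(3:ℤ_[3])•mm₀))
    (h₁ : Cong 2 (z₁ : M2) (1+(3:ℤ_[3])•mm₁))
    (h₂ : Cong 2 (z₂ : M2) (1+(3:ℤ_[3])•mm₂)) (m : ℕ) (B : SL(2, ℤ_[3]))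
    (hB : Cong (m+1) (B : M2) 1) :
    ∃ g ∈ Subgroup.closure {z₀, z₁, z₂}, Cong (m+2) (g : M2) (B : M2) := by
  have h1e00 : (1:M2) 0 0 = 1 := by norm_num [Matrix.one_apply]
  have h1e01 : (1:M2) 0 1 = 0 := by norm_num [Matrix.one_apply]
  have h1e10 : (1:M2) 1 0 = 0 := by norm_num [Matrix.one_apply]
  have h1e11 : (1:M2) 1 1 = 1 := by norm_num [Matrix.one_apply]
  obtain ⟨a', ha⟩ := hB 0 0
  obtain ⟨b', hb⟩ := hB 0 1
  obtain ⟨c', hc⟩ := hB 1 0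
  obtain ⟨d', hd⟩ := hB 1 1
  rw [h1e00] at ha; rw [h1e01] at hb; rw [h1e10] at hc; rw [h1e11] at hd
  have ha' : (B : M2) 0 0 = 1 + 3^(m+1) * a' := by linear_combination ha
  have hb' : (B : M2) 0 1 = 3^(m+1) * b' := by linear_combination hb
  have hc' : (B : M2) 1 0 = 3^(m+1) * c' := by linear_combination hc
  have hd' : (B : M2) 1 1 = 1 + 3^(m+1) * d' := by linear_combination hd
  have hdet : ((B : M2)).det = 1 := B.prop
  rw [Matrix.det_fin_two, ha', hb', hc', hd'] at hdet
  have htr : a' + d' = 3^(m+1) * (b' * c' - a' * d') := by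
    have h3 : (3:ℤ_[3])^(m+1) ≠ 0 := pow_ne_zero _ pad3_ne_zero
    apply mul_left_cancel₀ h3
    linear_combination hdet
  obtain ⟨g, hgmem, M, hgM, d00, d01, d10, d11⟩ :=
    genP z₀ z₁ z₂ h₀ h₁ h₂ m a' b' c'
  obtain ⟨q00, hq00⟩ := d00
  obtain ⟨q01, hq01⟩ := d01
  obtain ⟨q10, hq10⟩ := d10
  obtain ⟨q11, hq11⟩ := d11
  have hgE : ∀ i j, (g : M2) i j = (1:M2) i j + 3^(m+1) * M i j := by
    intro i j
    rw [hgM]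
    simp [Matrix.add_apply, Matrix.smul_apply, smul_eq_mul]
  refine ⟨g, hgmem, ?_⟩
  intro i j
  fin_cases i <;> fin_cases j
  · refine ⟨q00, ?_⟩
    show (g:M2) 0 0 - (B:M2) 0 0 = 3^(m+2) * q00
    rw [hgE 0 0, h1e00]; linear_combination -ha + 3^(m+1)*hq00
  · refine ⟨q01, ?_⟩
    show (g:M2) 0 1 - (B:M2) 0 1 = 3^(m+2) * q01
    rw [hgE 0 1, h1e01]; linear_combination -hb + 3^(m+1)*hq01
  · refine ⟨q10, ?_⟩
    show (g:M2) 1 0 - (B:M2) 1 0 = 3^(m+2) * q10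
    rw [hgE 1 0, h1e10]; linear_combination -hc + 3^(m+1)*hq10
  · refine ⟨q11 - 3^m * (b'*c' - a'*d'), ?_⟩
    show (g:M2) 1 1 - (B:M2) 1 1 = 3^(m+2) * (q11 - 3^m * (b'*c' - a'*d'))
    rw [hgE 1 1, h1e11]
    linear_combination -hd + 3^(m+1)*hq11 - 3^(m+1)*htr

private lemma model_cong1 (P : M2) : Cong 1 (1+(3:ℤ_[3])•P) 1 := by
  intro i j
  refine ⟨P i j, ?_⟩
  simp only [Matrix.add_apply, Matrix.smul_apply, smul_eq_mul, pow_one]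
  ring

private lemma norm_le_iff_dvd (d : ℤ_[3]) (n : ℕ) :
    ‖d‖ ≤ (3:ℝ)^(-(n:ℤ)) ↔ (3:ℤ_[3])^n ∣ d := by
  have h := PadicInt.norm_le_pow_iff_mem_span_pow d n
  rw [Ideal.mem_span_singleton] at h
  simpa using h

/-- The closed subgroup of `SL₂(ℤ₃)` generated by `z₀, z₁, z₂` equals the first
congruence kernel `N₁` (matrices congruent to the identity modulo 3). -/
theorem stmt_2 (α h : ℤ_[3]) (hα2 : α ^ 2 = -2) (hα1 : (3 : ℤ_[3]) ∣ (α - 1)) (hh : 2 * h = 1)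
    (x y : SL(2, ℤ_[3]))
    (hx : (x : Matrix (Fin 2) (Fin 2) ℤ_[3]) = !![0, -1; 1, -1])
    (hy : (y : Matrix (Fin 2) (Fin 2) ℤ_[3]) = α • !![0, h; 1, -1])
    (z₀ z₁ z₂ : SL(2, ℤ_[3]))
    (hz₀ : z₀ = y * x⁻¹) (hz₁ : z₁ = x⁻¹ * y) (hz₂ : z₂ = x⁻¹ * x⁻¹ * y * x)
    (N : ℕ → Subgroup SL(2, ℤ_[3]))
    (hN : ∀ k, ∀ A : SL(2, ℤ_[3]), A ∈ N k ↔
      ∀ i j, (3 : ℤ_[3]) ^ k ∣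
        ((A : Matrix (Fin 2) (Fin 2) ℤ_[3]) i j - (1 : Matrix (Fin 2) (Fin 2) ℤ_[3]) i j)) :
    (Subgroup.closure {z₀, z₁, z₂}).topologicalClosure = N 1 := by
  
  -- arithmetic facts about α and h
  obtain ⟨t, ht⟩ := hα1
  have h9t : (3*t)^2 = -1 - 2*α := by
    have ht' : α - 1 = 3*t := ht
    linear_combination hα2 - (α - 1 + 3*t) * ht'
  have key2 : (2:ℤ_[3]) * (α - 4 + 9*(h*(1+t^2))) = 0 := by
    linear_combination 9*(1+t^2)*hh + h9t
  have hαu' : α = 4 + 9*(-(h*(1+t^2))) := by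
    linear_combination h * key2 - (α - 4 + 9*(h*(1+t^2))) * hh
  obtain ⟨u, hαu⟩ : ∃ u, α = 4 + 9*u := ⟨_, hαu'⟩
  have hhw' : h = 5 + 9*(-h) := by linear_combination 5 * hh
  obtain ⟨w, hhw⟩ : ∃ w, h = 5 + 9*w := ⟨_, hhw'⟩
  -- coe matrices of y and z's
  have hy' : (y : M2) = !![0, α*h; α, -α] := by
    rw [hy]; ext i j; fin_cases i <;> fin_cases j <;> simp
  have hxinv : ((x⁻¹ : SL(2, ℤ_[3])) : M2) = !![-1, 1; -1, 0] := by
    rw [Matrix.SpecialLinearGroup.coe_inv, hx, Matrix.adjugate_fin_two]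
    norm_num
  have hz₀M : (z₀ : M2) = !![-(α*h), 0; 0, α] := by
    rw [hz₀, Matrix.SpecialLinearGroup.coe_mul, hy', hxinv]
    ext i j; fin_cases i <;> fin_cases j <;>
      simp [Matrix.mul_apply, Fin.sum_univ_two] <;> ring
  have hz₁M : (z₁ : M2) = !![α, -(α*(h+1)); 0, -(α*h)] := by
    rw [hz₁, Matrix.SpecialLinearGroup.coe_mul, hy', hxinv]
    ext i j; fin_cases i <;> fin_cases j <;>
      simp [Matrix.mul_apply, Fin.sum_univ_two] <;> ring
  have hz₂M : (z₂ : M2) = !![α, 0; α*(h+1), -(α*h)] := by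
    rw [hz₂, Matrix.SpecialLinearGroup.coe_mul, Matrix.SpecialLinearGroup.coe_mul,
      Matrix.SpecialLinearGroup.coe_mul, hy', hxinv, hx]
    ext i j; fin_cases i <;> fin_cases j <;>
      simp [Matrix.mul_apply, Fin.sum_univ_two] <;> ring
  -- congruences mod 9
  have h₀ : Cong 2 (z₀ : M2) (1+(3:ℤ_[3])•mm₀) := by
    intro i j
    fin_cases i <;> fin_cases j <;>
      simp [hz₀M, mm₀, Matrix.add_apply, Matrix.smul_apply, Matrix.one_apply]
    · exact ⟨-3-4*w-5*u-9*u*w, by rw [hαu, hhw]; ring⟩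
    · exact ⟨u, by rw [hαu]; ring⟩
  have h₁ : Cong 2 (z₁ : M2) (1+(3:ℤ_[3])•mm₁) := by
    intro i j
    fin_cases i <;> fin_cases j <;>
      simp [hz₁M, mm₁, Matrix.add_apply, Matrix.smul_apply, Matrix.one_apply]
    · exact ⟨u, by rw [hαu]; ring⟩
    · exact ⟨-3-4*w-6*u-9*u*w, by rw [hαu, hhw]; ring⟩
    · exact ⟨-3-4*w-5*u-9*u*w, by rw [hαu, hhw]; ring⟩
  have h₂ : Cong 2 (z₂ : M2) (1+(3:ℤ_[3])•mm₂) := by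
    intro i j
    fin_cases i <;> fin_cases j <;>
      simp [hz₂M, mm₂, Matrix.add_apply, Matrix.smul_apply, Matrix.one_apply]
    · exact ⟨u, by rw [hαu]; ring⟩
    · exact ⟨2+4*w+6*u+9*u*w, by rw [hαu, hhw]; ring⟩
    · exact ⟨-3-4*w-5*u-9*u*w, by rw [hαu, hhw]; ring⟩
  -- z's are in N 1
  have hmem : ∀ z : SL(2, ℤ_[3]), ∀ P : M2, Cong 2 (z : M2) (1+(3:ℤ_[3])•P) → z ∈ N 1 := by
    intro z P hc
    exact (hN 1 z).mpr (cong_trans (cong_weaken (by norm_num) hc) (model_cong1 P))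
  -- the subgroup N 1 is closed
  have hclosed : IsClosed ((N 1 : Subgroup SL(2, ℤ_[3])) : Set SL(2, ℤ_[3])) := by
    have hset : ((N 1 : Subgroup SL(2, ℤ_[3])) : Set SL(2, ℤ_[3]))
        = ⋂ (i : Fin 2) (j : Fin 2),
          {A : SL(2, ℤ_[3]) | ‖(A : M2) i j - (1:M2) i j‖ ≤ (3:ℝ)^(-(1:ℕ):ℤ)} := by
      ext A
      simp only [SetLike.mem_coe, hN 1 A, Set.mem_iInter, Set.mem_setOf_eq]
      constructor
      · intro hd i j; rw [norm_le_iff_dvd]; simpa using hd i j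
      · intro hd i j; have := (norm_le_iff_dvd _ 1).mp (hd i j); simpa using this
    rw [hset]
    refine isClosed_iInter fun i => isClosed_iInter fun j => ?_
    have hcont : Continuous fun A : SL(2, ℤ_[3]) => ‖(A : M2) i j - (1:M2) i j‖ :=
      ((continuous_subtype_val.matrix_elem i j).sub continuous_const).norm
    exact isClosed_le hcont continuous_const
  apply le_antisymm
  · apply Subgroup.topologicalClosure_minimal
    · rw [Subgroup.closure_le]
      intro g hg
      rcases hg with rfl | rfl | rfl
      · exact hmem _ _ h₀
      · exact hmem _ _ h₁
      · exact hmem _ _ h₂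
    · exact hclosed
  · intro A hA
    have hA' : Cong 1 (A : M2) 1 := by
      intro i j; simpa using (hN 1 A).mp hA i j
    have claim : ∀ k : ℕ, ∃ v : SL(2, ℤ_[3]),
        v ∈ Subgroup.closure {z₀, z₁, z₂} ∧ Cong (k+1) (v : M2) (A : M2) := by
      intro k
      induction k with
      | zero =>
          refine ⟨1, one_mem _, ?_⟩
          have := cong_symm hA'
          rwa [Matrix.SpecialLinearGroup.coe_one]
      | succ n ih =>
          obtain ⟨v, hvG, hv⟩ := ih
          have hinv : ((v⁻¹ : SL(2, ℤ_[3])) : M2) * (v : M2) = (1 : M2) := by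
            rw [← Matrix.SpecialLinearGroup.coe_mul, inv_mul_cancel,
              Matrix.SpecialLinearGroup.coe_one]
          have hBcong : Cong (n+1) (((v⁻¹ * A : SL(2, ℤ_[3])) : M2)) 1 := by
            have tt := cong_mul (cong_refl (n+1) ((v⁻¹ : SL(2, ℤ_[3])) : M2)) (cong_symm hv)
            rw [hinv] at tt
            rwa [← Matrix.SpecialLinearGroup.coe_mul] at tt
          obtain ⟨g, hgG, hg⟩ := stepLemma z₀ z₁ z₂ h₀ h₁ h₂ n (v⁻¹ * A) hBcong
          refine ⟨v * g, mul_mem hvG hgG, ?_⟩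
          have tt := cong_mul (cong_refl (n+2) (v : M2)) hg
          have e : (v : M2) * ((v⁻¹ * A : SL(2, ℤ_[3])) : M2) = (A : M2) := by
            rw [← Matrix.SpecialLinearGroup.coe_mul, mul_inv_cancel_left]
          rw [e, ← Matrix.SpecialLinearGroup.coe_mul] at tt
          exact tt
    choose v hvG hv using claim
    have hbound : ∀ (i j : Fin 2) (k : ℕ),
        ‖(v k : M2) i j - (A : M2) i j‖ ≤ ((3:ℝ)⁻¹)^(k+1) := by
      intro i j k
      have hd := hv k i j
      have hle := (norm_le_iff_dvd _ (k+1)).mpr hd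
      calc ‖(v k : M2) i j - (A : M2) i j‖ ≤ (3:ℝ)^(-((k+1:ℕ)):ℤ) := hle
        _ = ((3:ℝ)⁻¹)^(k+1) := by
            rw [_root_.zpow_neg, zpow_natCast, inv_pow]
    have htendM : Filter.Tendsto (fun k => ((v k : SL(2, ℤ_[3])) : M2)) Filter.atTop
        (nhds (A : M2)) := by
      rw [show ((A : M2)) = (fun i j => (A : M2) i j) from rfl]
      refine tendsto_pi_nhds.mpr fun i => tendsto_pi_nhds.mpr fun j => ?_
      rw [← tendsto_sub_nhds_zero_iff]
      refine squeeze_zero_norm (fun k => hbound i j k) ?_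
      have hgeo : Filter.Tendsto (fun n : ℕ => ((3:ℝ)⁻¹)^n) Filter.atTop (nhds 0) :=
        tendsto_pow_atTop_nhds_zero_of_lt_one (by norm_num) (by norm_num)
      exact hgeo.comp (Filter.tendsto_add_atTop_nat 1)
    have htend : Filter.Tendsto v Filter.atTop (nhds A) := by
      refine tendsto_subtype_rng.mpr ?_
      exact htendM
    exact mem_closure_of_tendsto htend (Filter.Eventually.of_forall hvG)
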